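/- Let π be a compactly supported probability measure on ℝ^d, let Q be a symmetric positive semidefinite d×d matrix with largest eigenvalue M := λ_max(Q) > 0, and set T := (1/2) log(1 + M⁻¹). Let p_T(x) := ∫ exp(−‖x − e^{−T} y‖² / (2(1 − e^{−2T}))) dπ(y) be the OU-evolved (unnormalized) density of π at time T. Then for every x ∈ ℝ^d, the Hessian satisfies ∇² log p_T(x) ≼ (1 + M)·(M · χ_M(π) − 1) · I, where χ_M(π) := sup_{z ∈ ℝ^d} ‖Cov(T_{M, M z} π)‖ is the susceptibility of π at parameter M. -/

import Mathlib

open MeasureTheory Set Matrix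

noncomputable section

/-- The isotropic quadratic tilt `T_{t, t z} π`, with density proportional to
`exp(-(t/2)‖y‖² + t⟨z,y⟩)` with respect to `π`. -/
def tiltD {d : ℕ} (π : Measure (Fin d → ℝ)) (t : ℝ) (z : Fin d → ℝ) :
    Measure (Fin d → ℝ) :=
  ((π.withDensity fun y => ENNReal.ofReal (Real.exp (-(t/2) * (y ⬝ᵥ y) + t * (z ⬝ᵥ y)))) univ)⁻¹ •
    π.withDensity fun y => ENNReal.ofReal (Real.exp (-(t/2) * (y ⬝ᵥ y) + t * (z ⬝ᵥ y)))

/-- Quadratic form `vᵀ Cov(μ) v` of the covariance matrix of a measure. -/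
def covQ {d : ℕ} (μ : Measure (Fin d → ℝ)) (v : Fin d → ℝ) : ℝ :=
  (∫ y, (v ⬝ᵥ y)^2 ∂μ) - (∫ y, v ⬝ᵥ y ∂μ)^2

/-- The OU-evolved (unnormalized) density of `π` at time `T = ½ log(1 + M⁻¹)`:
`p_T(x) = ∫ exp(-‖x - e^{-T} y‖²/(2(1-e^{-2T}))) dπ(y)`. -/
def pT {d : ℕ} (π : Measure (Fin d → ℝ)) (M : ℝ) (x : Fin d → ℝ) : ℝ :=
  ∫ y, Real.exp (-((x - Real.exp (-((1/2) * Real.log (1 + M⁻¹))) • y) ⬝ᵥ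
      (x - Real.exp (-((1/2) * Real.log (1 + M⁻¹))) • y)) /
      (2 * (1 - Real.exp (-2 * ((1/2) * Real.log (1 + M⁻¹)))))) ∂π

variable {d : ℕ}

/-- The dot-product-with-`y` continuous linear functional. -/
def Ldot (y : Fin d → ℝ) : (Fin d → ℝ) →L[ℝ] ℝ :=
  ∑ i, y i • (ContinuousLinearMap.proj i : (Fin d → ℝ) →L[ℝ] ℝ)

lemma Ldot_apply (y v : Fin d → ℝ) : Ldot y v = v ⬝ᵥ y := by
  simp [Ldot, dotProduct, ContinuousLinearMap.sum_apply, mul_comm]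

lemma continuous_Ldot : Continuous (Ldot (d := d)) := by
  apply continuous_finset_sum
  intro i _
  exact ((continuous_apply i).smul continuous_const)

lemma hasFDerivAt_dot (y x : Fin d → ℝ) :
    HasFDerivAt (fun x : Fin d → ℝ => x ⬝ᵥ y) (Ldot y) x := by
  have : (fun x : Fin d → ℝ => x ⬝ᵥ y) = fun x => Ldot y x := by
    funext x; rw [Ldot_apply]
  rw [this]
  exact (Ldot y).hasFDerivAt

lemma abs_dot_le (x y : Fin d → ℝ) : |x ⬝ᵥ y| ≤ d * ‖x‖ * ‖y‖ := by
  calc |x ⬝ᵥ y| ≤ ∑ i, |x i * y i| := Finset.abs_sum_le_sum_abs _ _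
    _ ≤ ∑ _i : Fin d, ‖x‖ * ‖y‖ := by
        apply Finset.sum_le_sum
        intro i _
        rw [abs_mul]
        have hx : |x i| ≤ ‖x‖ := norm_le_pi_norm x i
        have hy : |y i| ≤ ‖y‖ := norm_le_pi_norm y i
        exact mul_le_mul hx hy (abs_nonneg _) (norm_nonneg _)
    _ = d * ‖x‖ * ‖y‖ := by simp [Finset.sum_const, mul_assoc]

lemma norm_Ldot_le (y : Fin d → ℝ) : ‖Ldot y‖ ≤ d * ‖y‖ := by
  apply ContinuousLinearMap.opNorm_le_bound _ (by positivity)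
  intro v
  rw [Ldot_apply, Real.norm_eq_abs]
  calc |v ⬝ᵥ y| ≤ d * ‖v‖ * ‖y‖ := abs_dot_le v y
    _ = d * ‖y‖ * ‖v‖ := by ring

lemma continuous_dot_right (x : Fin d → ℝ) : Continuous (fun y : Fin d → ℝ => x ⬝ᵥ y) := by
  unfold dotProduct
  exact continuous_finset_sum _ fun i _ => (continuous_const.mul (continuous_apply i))

lemma continuous_dot_left (x : Fin d → ℝ) : Continuous (fun y : Fin d → ℝ => y ⬝ᵥ x) := by
  unfold dotProduct
  exact continuous_finset_sum _ fun i _ => ((continuous_apply i).mul continuous_const)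

lemma exp_dot_le (c : ℝ) (x y : Fin d → ℝ) {B R : ℝ} (hx : ‖x‖ ≤ B) (hy : ‖y‖ ≤ R)
    (hB : 0 ≤ B) (hR : 0 ≤ R) :
    Real.exp (c * (x ⬝ᵥ y)) ≤ Real.exp (|c| * (d * B * R)) := by
  apply Real.exp_le_exp.2
  calc c * (x ⬝ᵥ y) ≤ |c * (x ⬝ᵥ y)| := le_abs_self _
    _ = |c| * |x ⬝ᵥ y| := abs_mul _ _
    _ ≤ |c| * (d * ‖x‖ * ‖y‖) := mul_le_mul_of_nonneg_left (abs_dot_le _ _) (abs_nonneg c)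
    _ ≤ |c| * (d * B * R) := by
        apply mul_le_mul_of_nonneg_left _ (abs_nonneg c)
        have : (d:ℝ) * ‖x‖ ≤ d * B := mul_le_mul_of_nonneg_left hx (by positivity)
        exact mul_le_mul this hy (norm_nonneg _) (by positivity)

section param

set_option maxHeartbeats 1000000

variable (π : Measure (Fin d → ℝ)) [IsProbabilityMeasure π]

lemma hasFDerivAt_param (K : Set (Fin d → ℝ)) (hK : IsCompact K) (hKn : π Kᶜ = 0)
    (w : (Fin d → ℝ) → ℝ) (hw : Continuous w) (c : ℝ) (x₀ : Fin d → ℝ) :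
    HasFDerivAt (fun x => ∫ y, w y * Real.exp (c * (x ⬝ᵥ y)) ∂π)
      (∫ y, (w y * Real.exp (c * (x₀ ⬝ᵥ y)) * c) • Ldot y ∂π) x₀ := by
  obtain ⟨R, hR0, hRK⟩ : ∃ R : ℝ, 0 ≤ R ∧ ∀ y ∈ K, ‖y‖ ≤ R := by
    obtain ⟨R, hR⟩ := hK.isBounded.exists_norm_le
    exact ⟨max R 0, le_max_right _ _, fun y hy => (hR y hy).trans (le_max_left _ _)⟩
  obtain ⟨C, hC⟩ : ∃ C : ℝ, ∀ y ∈ K, ‖w y‖ ≤ C := hK.exists_bound_of_continuousOn hw.continuousOn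
  have hae : ∀ᵐ y ∂π, y ∈ K := by
    rw [ae_iff]
    exact hKn
  set B : ℝ := ‖x₀‖ + 1 with hB
  have hB0 : (0:ℝ) ≤ B := by positivity
  have hx₀B : ‖x₀‖ ≤ B := by simp [hB]
  set bound : (Fin d → ℝ) → ℝ := fun _ => C * Real.exp (|c| * (d * B * R)) * (|c| * (d * R))
    with hbound
  have hdiff : ∀ (y : Fin d → ℝ) (x : Fin d → ℝ),
      HasFDerivAt (fun x => w y * Real.exp (c * (x ⬝ᵥ y)))
        ((w y * Real.exp (c * (x ⬝ᵥ y)) * c) • Ldot y) x := by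
    intro y x
    have h1 : HasFDerivAt (fun x : Fin d → ℝ => c * (x ⬝ᵥ y)) (c • Ldot y) x :=
      (hasFDerivAt_dot y x).const_mul c
    have h3 := h1.exp.const_mul (w y)
    have h4 : (w y * Real.exp (c * (x ⬝ᵥ y)) * c) • Ldot y
        = w y • Real.exp (c * (x ⬝ᵥ y)) • c • Ldot y := by
      rw [smul_smul, smul_smul, mul_assoc]
    rw [h4]
    exact h3
  refine hasFDerivAt_integral_of_dominated_of_fderiv_le (𝕜 := ℝ) (μ := π) (x₀ := x₀)
    (F := fun x y => w y * Real.exp (c * (x ⬝ᵥ y)))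
    (F' := fun x y => (w y * Real.exp (c * (x ⬝ᵥ y)) * c) • Ldot y)
    (bound := bound) (s := Metric.ball x₀ 1) (Metric.ball_mem_nhds x₀ one_pos) ?_ ?_ ?_ ?_ ?_ ?_
  · filter_upwards with x
    exact (hw.mul ((continuous_const.mul (continuous_dot_right x)).rexp)).aestronglyMeasurable
  · apply Integrable.mono' (g := fun _ => C * Real.exp (|c| * (d * B * R)))
      (integrable_const _)
      (hw.mul ((continuous_const.mul (continuous_dot_right x₀)).rexp)).aestronglyMeasurable
    filter_upwards [hae] with y hy
    have h1 : ‖w y‖ ≤ C := hC y hy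
    have h0 : (0:ℝ) ≤ C := le_trans (norm_nonneg _) h1
    have h2 := exp_dot_le c x₀ y hx₀B (hRK y hy) hB0 hR0
    show ‖w y * Real.exp (c * (x₀ ⬝ᵥ y))‖ ≤ _
    rw [norm_mul, Real.norm_eq_abs (Real.exp _), abs_of_pos (Real.exp_pos _)]
    exact mul_le_mul h1 h2 (Real.exp_pos _).le h0
  · apply Continuous.aestronglyMeasurable
    exact ((hw.mul ((continuous_const.mul (continuous_dot_right x₀)).rexp)).mul
      continuous_const).smul continuous_Ldot
  · filter_upwards [hae] with y hy
    intro x hx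
    have hxB : ‖x‖ ≤ B := by
      have h := mem_ball_iff_norm.1 hx
      calc ‖x‖ = ‖x₀ + (x - x₀)‖ := by ring_nf
        _ ≤ ‖x₀‖ + ‖x - x₀‖ := norm_add_le _ _
        _ ≤ ‖x₀‖ + 1 := by linarith
    have h1 : ‖w y‖ ≤ C := hC y hy
    have h0 : (0:ℝ) ≤ C := le_trans (norm_nonneg _) h1
    have h2 := exp_dot_le c x y hxB (hRK y hy) hB0 hR0
    calc ‖(w y * Real.exp (c * (x ⬝ᵥ y)) * c) • Ldot y‖
        ≤ ‖w y * Real.exp (c * (x ⬝ᵥ y)) * c‖ * ‖Ldot y‖ :=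
          ContinuousLinearMap.opNorm_smul_le _ _
      _ ≤ (C * Real.exp (|c| * (d * B * R)) * |c|) * (d * R) := by
          apply mul_le_mul _ _ (norm_nonneg _) (by positivity)
          · rw [norm_mul, norm_mul, Real.norm_eq_abs (Real.exp _),
              abs_of_pos (Real.exp_pos _), Real.norm_eq_abs c]
            exact mul_le_mul (mul_le_mul h1 h2 (Real.exp_pos _).le h0) le_rfl (abs_nonneg c)
              (by positivity)
          · exact (norm_Ldot_le y).trans
              (mul_le_mul_of_nonneg_left (hRK y hy) (by positivity))
      _ = bound y := by rw [hbound]; ring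
  · exact integrable_const _
  · filter_upwards with y
    intro x _
    exact hdiff y x

end param
section helpers

variable {d : ℕ} (π : Measure (Fin d → ℝ)) [IsProbabilityMeasure π]

lemma integrable_cont_bdd {V : Type*} [NormedAddCommGroup V]
    (K : Set (Fin d → ℝ)) (hK : IsCompact K) (hKn : π Kᶜ = 0)
    (f : (Fin d → ℝ) → V) (hf : Continuous f) : Integrable f π := by
  obtain ⟨C, hC⟩ : ∃ C : ℝ, ∀ y ∈ K, ‖f y‖ ≤ C := hK.exists_bound_of_continuousOn hf.continuousOn
  have hae : ∀ᵐ y ∂π, y ∈ K := by rw [ae_iff]; exact hKn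
  apply Integrable.mono' (g := fun _ => C) (integrable_const _) hf.aestronglyMeasurable
  filter_upwards [hae] with y hy
  exact hC y hy

/-- The weight function `exp(-(M/2)‖y‖²)`. -/
def wF (M : ℝ) (y : Fin d → ℝ) : ℝ := Real.exp (-(M/2) * (y ⬝ᵥ y))

lemma continuous_wF (M : ℝ) : Continuous (wF (d := d) M) :=
  ((continuous_const.mul (continuous_id.dotProduct continuous_id))).rexp

end helpers
section core

variable {d : ℕ} (π : Measure (Fin d → ℝ)) [IsProbabilityMeasure π]

/-- `F(x) = ∫ exp(-(M/2)‖y‖² + c⟨x,y⟩) dπ`. -/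
def FInt (M c : ℝ) (x : Fin d → ℝ) : ℝ := ∫ y, wF M y * Real.exp (c * (x ⬝ᵥ y)) ∂π

/-- Fréchet derivative of `FInt`. -/
def GInt (M c : ℝ) (x : Fin d → ℝ) : (Fin d → ℝ) →L[ℝ] ℝ :=
  ∫ y, (wF M y * Real.exp (c * (x ⬝ᵥ y)) * c) • Ldot y ∂π

def S1 (M c : ℝ) (v x : Fin d → ℝ) : ℝ :=
  ∫ y, (v ⬝ᵥ y) * (wF M y * Real.exp (c * (x ⬝ᵥ y))) ∂π

def S2 (M c : ℝ) (v x : Fin d → ℝ) : ℝ :=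
  ∫ y, (v ⬝ᵥ y)^2 * (wF M y * Real.exp (c * (x ⬝ᵥ y))) ∂π

variable (K : Set (Fin d → ℝ)) (hK : IsCompact K) (hKn : π Kᶜ = 0) (M c : ℝ)

include hK hKn

lemma FInt_pos (x : Fin d → ℝ) : 0 < FInt π M c x := by
  rw [FInt]
  have hint : Integrable (fun y => wF M y * Real.exp (c * (x ⬝ᵥ y))) π :=
    integrable_cont_bdd π K hK hKn _
      ((continuous_wF M).mul ((continuous_const.mul (continuous_dot_right x)).rexp))
  rw [integral_pos_iff_support_of_nonneg_ae _ hint]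
  · have : Function.support (fun y => wF M y * Real.exp (c * (x ⬝ᵥ y))) = univ := by
      apply eq_univ_of_forall
      intro y
      exact (mul_pos (Real.exp_pos _) (Real.exp_pos _)).ne'
    rw [this]
    simp
  · filter_upwards with y
    exact (mul_pos (Real.exp_pos _) (Real.exp_pos _)).le

lemma hasFDerivAt_FInt (x : Fin d → ℝ) :
    HasFDerivAt (FInt π M c) (GInt π M c x) x :=
  hasFDerivAt_param π K hK hKn (wF M) (continuous_wF M) c x

lemma GInt_apply (x v : Fin d → ℝ) : GInt π M c x v = c * S1 π M c v x := by
  rw [GInt, ContinuousLinearMap.integral_apply]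
  · rw [S1, ← integral_const_mul]
    congr 1
    funext y
    rw [ContinuousLinearMap.smul_apply, Ldot_apply, smul_eq_mul]
    ring
  · exact integrable_cont_bdd π K hK hKn _
      ((((continuous_wF M).mul ((continuous_const.mul (continuous_dot_right x)).rexp)).mul
        continuous_const).smul continuous_Ldot)

lemma hasFDerivAt_S1 (v x : Fin d → ℝ) :
    HasFDerivAt (fun u => S1 π M c v u)
      (∫ y, (((v ⬝ᵥ y) * wF M y) * Real.exp (c * (x ⬝ᵥ y)) * c) • Ldot y ∂π) x := by
  have h := hasFDerivAt_param π K hK hKn (fun y => (v ⬝ᵥ y) * wF M y)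
    ((continuous_dot_right v).mul (continuous_wF M)) c x
  convert h using 2 with u
  · rw [S1]
    congr 1
    funext y
    ring

lemma S1_deriv_apply (v x : Fin d → ℝ) :
    (∫ y, (((v ⬝ᵥ y) * wF M y) * Real.exp (c * (x ⬝ᵥ y)) * c) • Ldot y ∂π) v
      = c * S2 π M c v x := by
  rw [ContinuousLinearMap.integral_apply]
  · rw [S2, ← integral_const_mul]
    congr 1
    funext y
    rw [ContinuousLinearMap.smul_apply, Ldot_apply, smul_eq_mul]
    ring
  · exact integrable_cont_bdd π K hK hKn _
      (((((continuous_dot_right v).mul (continuous_wF M)).mul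
        ((continuous_const.mul (continuous_dot_right x)).rexp)).mul
        continuous_const).smul continuous_Ldot)

end core
section tilt

variable {d : ℕ} (π : Measure (Fin d → ℝ)) [IsProbabilityMeasure π]
variable (K : Set (Fin d → ℝ)) (hK : IsCompact K) (hKn : π Kᶜ = 0) (M c : ℝ)

include hK hKn

/-- Integrals against the tilt `T_{M, Mz}π` with `z = (c/M)•x` are normalized integrals
against the density `wF M y * exp(c⟨x,y⟩)`. -/
lemma integral_tilt (hM : M ≠ 0) (x : Fin d → ℝ) (g : (Fin d → ℝ) → ℝ) (hg : Continuous g) :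
    ∫ y, g y ∂(tiltD π M ((c/M) • x))
      = (FInt π M c x)⁻¹ * ∫ y, g y * (wF M y * Real.exp (c * (x ⬝ᵥ y))) ∂π := by
  set ρ : (Fin d → ℝ) → ℝ := fun y => wF M y * Real.exp (c * (x ⬝ᵥ y)) with hρ
  have hcont : Continuous ρ :=
    (continuous_wF M).mul ((continuous_const.mul (continuous_dot_right x)).rexp)
  have hint : Integrable ρ π := integrable_cont_bdd π K hK hKn _ hcont
  have hFpos := FInt_pos π K hK hKn M c x
  have hρpos : ∀ y, 0 < ρ y := fun y => mul_pos (Real.exp_pos _) (Real.exp_pos _)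
  have hfun : (fun y : Fin d → ℝ =>
      ENNReal.ofReal (Real.exp (-(M/2) * (y ⬝ᵥ y) + M * ((((c/M) • x)) ⬝ᵥ y)))) = fun y =>
      ENNReal.ofReal (ρ y) := by
    funext y
    congr 1
    simp only [Real.exp_add, hρ, wF]
    congr 2
    rw [smul_dotProduct, smul_eq_mul]
    field_simp
  have hmass : (π.withDensity fun y => ENNReal.ofReal (ρ y)) univ
      = ENNReal.ofReal (FInt π M c x) := by
    rw [withDensity_apply _ MeasurableSet.univ, setLIntegral_univ,
      ← ofReal_integral_eq_lintegral_ofReal hint]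
    · rfl
    · filter_upwards with y
      exact (hρpos y).le
  have hwd : ∀ h : (Fin d → ℝ) → ℝ, Continuous h →
      ∫ y, h y ∂(π.withDensity fun y => ENNReal.ofReal (ρ y)) = ∫ y, h y * ρ y ∂π := by
    intro h hh
    have : (fun y : Fin d → ℝ => ENNReal.ofReal (ρ y))
        = fun y => ((Real.toNNReal (ρ y) : NNReal) : ENNReal) := rfl
    rw [this, integral_withDensity_eq_integral_smul
      (hcont.measurable.real_toNNReal) h]
    congr 1
    funext y
    rw [NNReal.smul_def, Real.coe_toNNReal _ (hρpos y).le, smul_eq_mul, mul_comm]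
  rw [tiltD, hfun, integral_smul_measure, hmass, ENNReal.toReal_inv, ENNReal.toReal_ofReal
    hFpos.le, smul_eq_mul, hwd g hg]

end tilt
section covq

variable {d : ℕ} (π : Measure (Fin d → ℝ)) [IsProbabilityMeasure π]
variable (K : Set (Fin d → ℝ)) (hK : IsCompact K) (hKn : π Kᶜ = 0) (M c : ℝ)

include hK hKn

lemma covQ_tilt (hM : M ≠ 0) (x v : Fin d → ℝ) :
    covQ (tiltD π M ((c/M) • x)) v
      = (FInt π M c x)⁻¹ * S2 π M c v x - ((FInt π M c x)⁻¹ * S1 π M c v x)^2 := by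
  rw [covQ, integral_tilt π K hK hKn M c hM x _ (by
      exact (continuous_dot_right v).pow 2),
    integral_tilt π K hK hKn M c hM x _ (continuous_dot_right v), S1, S2]

end covq

section quadratic

variable {d : ℕ}

lemma hasFDerivAt_sq (u : Fin d → ℝ) :
    HasFDerivAt (fun x : Fin d → ℝ => x ⬝ᵥ x) ((2:ℝ) • Ldot u) u := by
  have h : ∀ i ∈ Finset.univ, HasFDerivAt (fun x : Fin d → ℝ => x i * x i)
      (u i • (ContinuousLinearMap.proj i : (Fin d → ℝ) →L[ℝ] ℝ)
        + u i • (ContinuousLinearMap.proj i : (Fin d → ℝ) →L[ℝ] ℝ)) u := by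
    intro i _
    exact ((ContinuousLinearMap.proj i : (Fin d → ℝ) →L[ℝ] ℝ).hasFDerivAt).mul
      ((ContinuousLinearMap.proj i : (Fin d → ℝ) →L[ℝ] ℝ).hasFDerivAt)
  have hsum := HasFDerivAt.fun_sum h
  have : (fun x : Fin d → ℝ => ∑ i : Fin d, x i * x i) = fun x : Fin d → ℝ => x ⬝ᵥ x := rfl
  rw [this] at hsum
  refine hsum.congr_fderiv (Eq.symm ?_)
  rw [Ldot, Finset.smul_sum]
  exact Finset.sum_congr rfl fun i _ => two_smul ℝ _

end quadratic

section consts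

variable {d : ℕ} (π : Measure (Fin d → ℝ)) [IsProbabilityMeasure π] (M : ℝ)

lemma exp_neg2T (hM : 0 < M) :
    Real.exp (-2 * ((1/2) * Real.log (1 + M⁻¹))) = M/(M+1) := by
  have h1 : (0:ℝ) < 1 + M⁻¹ := by positivity
  have h2 : -2 * ((1/2) * Real.log (1 + M⁻¹)) = -Real.log (1 + M⁻¹) := by ring
  rw [h2, Real.exp_neg, Real.exp_log h1]
  rw [eq_div_iff (by positivity)]
  field_simp

lemma sM_sq (hM : 0 < M) :
    (Real.exp (-((1/2) * Real.log (1 + M⁻¹))))^2 = M/(M+1) := by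
  rw [sq, ← Real.exp_add, ← exp_neg2T M hM]
  ring_nf

lemma pT_eq (hM : 0 < M) (x : Fin d → ℝ) :
    pT π M x = Real.exp (-(x ⬝ᵥ x) * ((M+1)/2))
      * FInt π M (Real.exp (-((1/2) * Real.log (1 + M⁻¹))) * (M+1)) x := by
  set s : ℝ := Real.exp (-((1/2) * Real.log (1 + M⁻¹))) with hs
  have hs2 : s^2 = M/(M+1) := sM_sq M hM
  rw [pT, FInt, ← integral_const_mul]
  congr 1
  funext y
  rw [wF, ← Real.exp_add, ← Real.exp_add]
  congr 1
  have hdot : (x - s • y) ⬝ᵥ (x - s • y)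
      = x ⬝ᵥ x - 2*s*(x ⬝ᵥ y) + s^2 * (y ⬝ᵥ y) := by
    simp only [sub_dotProduct, dotProduct_sub, smul_dotProduct, dotProduct_smul,
      dotProduct_comm y x, smul_eq_mul]
    ring
  rw [hdot, exp_neg2T M hM]
  have h1 : 1 - M/(M+1) = (M+1)⁻¹ := by field_simp; ring
  rw [h1]
  have h2 : (M+1) * s^2 = M := by
    rw [hs2]; field_simp
  field_simp
  linear_combination (-(y ⬝ᵥ y)) * h2

end consts
section logderiv

variable {d : ℕ} (π : Measure (Fin d → ℝ)) [IsProbabilityMeasure π]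
variable (K : Set (Fin d → ℝ)) (hK : IsCompact K) (hKn : π Kᶜ = 0) (M : ℝ)

include hK hKn

lemma hasFDerivAt_logpT (hM : 0 < M) (u : Fin d → ℝ) :
    HasFDerivAt (fun x => Real.log (pT π M x))
      ((-(M+1)) • Ldot u
        + (FInt π M (Real.exp (-((1/2) * Real.log (1 + M⁻¹))) * (M+1)) u)⁻¹ •
          GInt π M (Real.exp (-((1/2) * Real.log (1 + M⁻¹))) * (M+1)) u) u := by
  set c : ℝ := Real.exp (-((1/2) * Real.log (1 + M⁻¹))) * (M+1) with hc
  have hFpos : ∀ w, 0 < FInt π M c w := fun w => FInt_pos π K hK hKn M c w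
  have hfun : (fun x => Real.log (pT π M x))
      = fun x => -(x ⬝ᵥ x) * ((M+1)/2) + Real.log (FInt π M c x) := by
    funext x
    rw [pT_eq π M hM x, Real.log_mul (Real.exp_pos _).ne' (hFpos x).ne', Real.log_exp]
  rw [hfun]
  have h1 : HasFDerivAt (fun x : Fin d → ℝ => -(x ⬝ᵥ x) * ((M+1)/2))
      ((-(M+1)) • Ldot u) u := by
    have h := (hasFDerivAt_sq u).const_mul (-(M+1)/2)
    have heq : (fun x : Fin d → ℝ => -(M+1)/2 * (x ⬝ᵥ x))
        = fun x : Fin d → ℝ => -(x ⬝ᵥ x) * ((M+1)/2) := by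
      funext x; ring
    rw [heq] at h
    refine h.congr_fderiv ?_
    rw [smul_smul]
    norm_num
  have h2 : HasFDerivAt (fun x => Real.log (FInt π M c x))
      ((FInt π M c u)⁻¹ • GInt π M c u) u :=
    (hasFDerivAt_FInt π K hK hKn M c u).log (hFpos u).ne'
  exact h1.add h2

end logderiv

/-- **Hessian bound on the boosted prior via the susceptibility.**  Let `π` be a compactly
supported probability measure, `Q ⪰ 0` symmetric with largest eigenvalue `M > 0`, and let
`χ` be an upper bound of the susceptibility `χ_M(π) = sup_z ‖Cov(T_{M,Mz}π)‖` (expressed as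
a quadratic-form bound).  Then `∇² log p_T(x) ≼ (1+M)(Mχ - 1)·I` for all `x`, where the
Hessian quadratic form in direction `v` is expressed via iterated directional derivatives. -/
theorem boosted_prior_hessian_bound
    (d : ℕ) (π : Measure (Fin d → ℝ)) [IsProbabilityMeasure π]
    (hsupp : ∃ K : Set (Fin d → ℝ), IsCompact K ∧ π Kᶜ = 0)
    (Q : Matrix (Fin d) (Fin d) ℝ) (hQ : Q.PosSemidef)
    (M : ℝ) (hM : 0 < M)
    (hMub : (M • (1 : Matrix (Fin d) (Fin d) ℝ) - Q).PosSemidef)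
    (hMmem : M ∈ spectrum ℝ Q)
    (χ : ℝ)
    (hχ : ∀ z v : Fin d → ℝ, covQ (tiltD π M z) v ≤ χ * (v ⬝ᵥ v)) :
    ∀ x v : Fin d → ℝ,
      fderiv ℝ (fun y => fderiv ℝ (fun u => Real.log (pT π M u)) y v) x v
        ≤ (1 + M) * (M * χ - 1) * (v ⬝ᵥ v) := by
  obtain ⟨K, hK, hKn⟩ := hsupp
  intro x v
  set c : ℝ := Real.exp (-((1/2) * Real.log (1 + M⁻¹))) * (M+1) with hc
  have hM1 : (0:ℝ) < M + 1 := by linarith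
  have hc2 : c^2 = M * (M+1) := by
    rw [hc, mul_pow, sM_sq M hM]
    field_simp
  clear_value c
  have hFpos : ∀ u, 0 < FInt π M c u := fun u => FInt_pos π K hK hKn M c u
  -- the first derivative, as a function
  have hinner : (fun y => fderiv ℝ (fun u => Real.log (pT π M u)) y v)
      = fun y => (-(M+1)) * (v ⬝ᵥ y) + (FInt π M c y)⁻¹ * (c * S1 π M c v y) := by
    funext y
    rw [(hasFDerivAt_logpT π K hK hKn M hM y).fderiv, ← hc]
    rw [ContinuousLinearMap.add_apply, ContinuousLinearMap.smul_apply,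
      ContinuousLinearMap.smul_apply, Ldot_apply, smul_eq_mul, smul_eq_mul,
      GInt_apply π K hK hKn M c y v]
  rw [hinner]
  -- second derivative pieces
  have hA : HasFDerivAt (fun y : Fin d → ℝ => (-(M+1)) * (v ⬝ᵥ y)) ((-(M+1)) • Ldot v) x := by
    have h := (hasFDerivAt_dot v x).const_mul (-(M+1))
    have heq : (fun y : Fin d → ℝ => (-(M+1)) * (y ⬝ᵥ v))
        = fun y : Fin d → ℝ => (-(M+1)) * (v ⬝ᵥ y) := by
      funext y; rw [dotProduct_comm]
    rwa [heq] at h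
  have hB1 : HasFDerivAt (fun y => (FInt π M c y)⁻¹)
      ((ContinuousLinearMap.smulRight (1 : ℝ →L[ℝ] ℝ) (-(FInt π M c x ^ 2)⁻¹)).comp
        (GInt π M c x)) x :=
    (hasFDerivAt_inv (hFpos x).ne').comp x (hasFDerivAt_FInt π K hK hKn M c x)
  have hB2 : HasFDerivAt (fun y => c * S1 π M c v y)
      (c • ∫ y, (((v ⬝ᵥ y) * wF M y) * Real.exp (c * (x ⬝ᵥ y)) * c) • Ldot y ∂π) x :=
    (hasFDerivAt_S1 π K hK hKn M c v x).const_mul c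
  have hB := hB1.fun_mul hB2
  have htot := hA.fun_add hB
  rw [htot.fderiv]
  -- compute the value of the second derivative in direction `v`
  have hval : ((-(M+1)) • Ldot v
      + ((FInt π M c x)⁻¹ •
          (c • ∫ y, (((v ⬝ᵥ y) * wF M y) * Real.exp (c * (x ⬝ᵥ y)) * c) • Ldot y ∂π)
        + (c * S1 π M c v x) •
          ((ContinuousLinearMap.smulRight (1 : ℝ →L[ℝ] ℝ) (-(FInt π M c x ^ 2)⁻¹)).comp
            (GInt π M c x)))) v
      = (-(M+1)) * (v ⬝ᵥ v)
        + M * (M+1) * ((FInt π M c x)⁻¹ * S2 π M c v x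
          - ((FInt π M c x)⁻¹ * S1 π M c v x)^2) := by
    simp only [ContinuousLinearMap.add_apply, ContinuousLinearMap.smul_apply,
      ContinuousLinearMap.comp_apply, ContinuousLinearMap.smulRight_apply,
      ContinuousLinearMap.one_apply, Ldot_apply, smul_eq_mul]
    rw [S1_deriv_apply π K hK hKn M c v x, GInt_apply π K hK hKn M c x v]
    have hF := (hFpos x).ne'
    field_simp
    linear_combination (FInt π M c x * S2 π M c v x - S1 π M c v x ^ 2) * hc2
  rw [hval]
  -- apply the susceptibility bound
  have hcov := hχ ((c/M) • x) v
  rw [covQ_tilt π K hK hKn M c hM.ne' x v] at hcov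
  have hMM : (0:ℝ) ≤ M * (M+1) := by positivity
  nlinarith [mul_le_mul_of_nonneg_left hcov hMM]
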